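/- arXiv:1512.09035 — 2 statements merged into one kernel-verified Lean document; each statement's English description precedes it below -/
import Mathlib

section
/- Let p be the step distribution of an irreducible random walk on ℤ^d with finite support V. There exist constants η ≥ 1 and C > 0 such that for all δ ∈ M and all v ∈ V, e^{⟨s(δ), v⟩} / κ(s(δ)) ≥ C · dist(δ, ∂M)^η. -/
/- Framework for random walks on the integer lattice ℤ^d. -/

noncomputable section

namespace RWalk

/-- `ℝ^d` with the Euclidean norm. -/
abbrev E (d : ℕ) : Type := EuclideanSpace ℝ (Fin d)

/-- The embedding of `ℤ^d` into `ℝ^d`. -/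
def emb {d : ℕ} (x : Fin d → ℤ) : E d := WithLp.toLp 2 (fun i => (x i : ℝ))

/-- The bilinear pairing `⟨x, y⟩ = ∑ i, x i * y i` on `ℝ^d`. -/
def pairR {d : ℕ} (x y : E d) : ℝ := ∑ i, x i * y i

/-- The ℓ¹-norm on `ℝ^d`. -/
def l1 {d : ℕ} (x : E d) : ℝ := ∑ i, |x i|

/-- The `n`-step transition function of the walk with step distribution `p`:
`tfun p 0 = δ₀`, hence `tfun p 1 = p` and
`tfun p (n+1) x = ∑ y, tfun p n y * p (x - y)`. -/
def tfun {d : ℕ} (p : (Fin d → ℤ) → ℝ) : ℕ → (Fin d → ℤ) → ℝ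
  | 0, x => if x = 0 then 1 else 0
  | n + 1, x => ∑ᶠ y : Fin d → ℤ, tfun p n y * p (x - y)

/-- `κ(x) = ∑_{v ∈ V} p(v) e^{⟨x,v⟩}`. -/
def kappa {d : ℕ} (p : (Fin d → ℤ) → ℝ) (x : E d) : ℝ :=
  ∑ᶠ v : Fin d → ℤ, p v * Real.exp (pairR x (emb v))

/-- `log κ`. -/
def logKappa {d : ℕ} (p : (Fin d → ℤ) → ℝ) : E d → ℝ := fun x => Real.log (kappa p x)

/-- `φ(δ) = sup_{x ∈ ℝ^d} (⟨x,δ⟩ - log κ(x))`. -/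
def phi {d : ℕ} (p : (Fin d → ℤ) → ℝ) (δ : E d) : ℝ :=
  sSup (Set.range fun x : E d => pairR x δ - logKappa p x)

/-- `M`, the interior of the convex hull of the support `V` of `p`. -/
def Mset {d : ℕ} (p : (Fin d → ℤ) → ℝ) : Set (E d) :=
  interior (convexHull ℝ (emb '' Function.support p))

/-- The Hessian matrix of `f` at `x`. -/
def hessMat {d : ℕ} (f : E d → ℝ) (x : E d) : Matrix (Fin d) (Fin d) ℝ :=
  fun i j => fderiv ℝ (fun y => fderiv ℝ f y (EuclideanSpace.single j 1)) x
      (EuclideanSpace.single i 1)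

/-- The quadratic form `u ↦ uᵀ A u` of a matrix `A`. -/
def quadForm {d : ℕ} (A : Matrix (Fin d) (Fin d) ℝ) (u : E d) : ℝ :=
  ∑ i, ∑ j, u i * A i j * u j

/-- The second directional derivative `D_u² f(x)`. -/
def D2 {d : ℕ} (f : E d → ℝ) (x u : E d) : ℝ :=
  iteratedDeriv 2 (fun t : ℝ => f (x + t • u)) 0

/-- Irreducibility: for every `x ∈ ℤ^d` there is `n ∈ ℕ` with `p(n; x) > 0`. -/
def Irred {d : ℕ} (p : (Fin d → ℤ) → ℝ) : Prop :=
  ∀ x : Fin d → ℤ, ∃ n : ℕ, 0 < n ∧ 0 < tfun p n x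

/-- The step distribution of the simple random walk on `ℤ^d`. -/
def srw (d : ℕ) (v : Fin d → ℤ) : ℝ :=
  if (∑ i, (v i).natAbs) = 1 then (2 * (d : ℝ))⁻¹ else 0

/-! ### Auxiliary lemmas -/

open Real Metric

lemma pairR_inner {d : ℕ} (x y : E d) : pairR x y = inner ℝ x y := by
  rw [PiLp.inner_apply]; simp [pairR, RCLike.inner_apply, mul_comm]

lemma pairR_linear {d : ℕ} (s : E d) : IsLinearMap ℝ (fun x : E d => pairR s x) := by
  constructor
  · intro x y; simp only [pairR_inner]; exact inner_add_right s x y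
  · intro c x; simp only [pairR_inner]; exact real_inner_smul_right s x c

lemma pair_le_of_mem_hull {d : ℕ} {A : Set (E d)} {s : E d} {cc : ℝ}
    (h : ∀ a ∈ A, pairR s a ≤ cc) {x : E d} (hx : x ∈ convexHull ℝ A) : pairR s x ≤ cc :=
  convexHull_min h (convex_halfSpace_le (pairR_linear s) cc) hx

lemma pair_ge_of_mem_hull {d : ℕ} {A : Set (E d)} {s : E d} {cc : ℝ}
    (h : ∀ a ∈ A, cc ≤ pairR s a) {x : E d} (hx : x ∈ convexHull ℝ A) : cc ≤ pairR s x :=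
  convexHull_min h (convex_halfSpace_ge (pairR_linear s) cc) hx

lemma kappa_eq {d : ℕ} {p : (Fin d → ℤ) → ℝ} (hfin : (Function.support p).Finite) (x : E d) :
    kappa p x = ∑ v ∈ hfin.toFinset, p v * Real.exp (pairR x (emb v)) := by
  apply finsum_eq_sum_of_support_subset
  intro v hv
  simp only [Set.Finite.coe_toFinset, Function.mem_support]
  intro h
  apply hv
  simp [h]

lemma kappa_pos {d : ℕ} {p : (Fin d → ℤ) → ℝ} (hp : ∀ v, 0 ≤ p v)
    (hfin : (Function.support p).Finite)
    (hne : hfin.toFinset.Nonempty) (x : E d) : 0 < kappa p x := by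
  obtain ⟨v₀, hv₀⟩ := hne
  rw [kappa_eq hfin]
  apply Finset.sum_pos'
  · intro v _; exact mul_nonneg (hp v) (Real.exp_nonneg _)
  · refine ⟨v₀, hv₀, ?_⟩
    have : p v₀ ≠ 0 := by simpa using hfin.mem_toFinset.mp hv₀
    have : 0 < p v₀ := lt_of_le_of_ne (hp v₀) (Ne.symm this)
    positivity

lemma hasGradientAt_logKappa {d : ℕ} {p : (Fin d → ℤ) → ℝ} (hp : ∀ v, 0 ≤ p v)
    (hfin : (Function.support p).Finite)
    (hne : hfin.toFinset.Nonempty) (s : E d) :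
    HasGradientAt (logKappa p)
      ((kappa p s)⁻¹ • ∑ v ∈ hfin.toFinset, (p v * Real.exp (pairR s (emb v))) • emb v) s := by
  have hκ := kappa_pos hp hfin hne s
  have hsum : HasFDerivAt (fun x : E d => ∑ v ∈ hfin.toFinset, p v * Real.exp (pairR x (emb v)))
      (∑ v ∈ hfin.toFinset, (p v * Real.exp (pairR s (emb v))) • (innerSL ℝ (emb v))) s := by
    apply HasFDerivAt.fun_sum
    intro v _
    have h1 : HasFDerivAt (fun x : E d => (inner ℝ (emb v) x : ℝ)) (innerSL ℝ (emb v)) s :=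
      (innerSL ℝ (emb v)).hasFDerivAt
    have h2 : HasFDerivAt (fun x : E d => Real.exp (inner ℝ (emb v) x))
        (Real.exp (inner ℝ (emb v) s) • innerSL ℝ (emb v)) s :=
      (Real.hasDerivAt_exp _).comp_hasFDerivAt s h1
    have h3 := h2.const_mul (p v)
    have heq : (fun x : E d => p v * Real.exp (inner ℝ (emb v) x))
        = fun x => p v * Real.exp (pairR x (emb v)) := by
      funext x; rw [pairR_inner, real_inner_comm]
    rw [heq] at h3
    rw [pairR_inner, real_inner_comm]
    convert h3 using 1
    · rfl
    rw [smul_comm]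
    module
  have hlog : HasFDerivAt (logKappa p)
      ((kappa p s)⁻¹ •
        ∑ v ∈ hfin.toFinset, (p v * Real.exp (pairR s (emb v))) • (innerSL ℝ (emb v))) s := by
    have heq : logKappa p
        = fun x => Real.log (∑ v ∈ hfin.toFinset, p v * Real.exp (pairR x (emb v))) := by
      funext x; rw [logKappa, kappa_eq hfin]
    rw [heq]
    have := (Real.hasDerivAt_log
      (x := ∑ v ∈ hfin.toFinset, p v * Real.exp (pairR s (emb v)))
      (by rw [← kappa_eq hfin]; exact ne_of_gt hκ)).comp_hasFDerivAt s hsum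
    rw [← kappa_eq hfin] at this
    exact this
  rw [hasGradientAt_iff_hasFDerivAt]
  convert hlog using 1
  · rfl
  case e'_8 => rfl
  ext y
  simp only [ContinuousLinearMap.smul_apply, ContinuousLinearMap.sum_apply,
    InnerProductSpace.toDual_apply_apply]
  rw [inner_smul_left]
  simp only [conj_trivial]
  rw [sum_inner]
  congr 1
  apply Finset.sum_congr rfl
  intro v _
  rw [inner_smul_left, innerSL_apply_apply]
  simp

lemma exists_eps1 {d : ℕ} {p : (Fin d → ℤ) → ℝ} (hfin : (Function.support p).Finite) :
    ∃ ε : ℝ, 0 < ε ∧ ∀ W : Finset (Fin d → ℤ), W ⊆ hfin.toFinset →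
      (convexHull ℝ (emb '' (W : Set _)) ∩ Mset p).Nonempty →
      ∃ x ∈ convexHull ℝ (emb '' (W : Set _)),
        Metric.ball x ε ⊆ convexHull ℝ (emb '' Function.support p) := by
  classical
  set 𝒲 := hfin.toFinset.powerset.filter
    (fun W : Finset (Fin d → ℤ) =>
      (convexHull ℝ (emb '' (W : Set (Fin d → ℤ))) ∩ Mset p).Nonempty) with h𝒲
  have key : ∀ W ∈ 𝒲, ∃ ε : ℝ, 0 < ε ∧ ∃ x ∈ convexHull ℝ (emb '' (W : Set _)),
      Metric.ball x ε ⊆ convexHull ℝ (emb '' Function.support p) := by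
    intro W hW
    rw [h𝒲, Finset.mem_filter] at hW
    obtain ⟨x, hxc, hxM⟩ := hW.2
    obtain ⟨ε, hε, hball⟩ := Metric.isOpen_iff.mp isOpen_interior x hxM
    exact ⟨ε, hε, x, hxc, hball.trans interior_subset⟩
  choose! f hf x hx hb using key
  by_cases hWne : 𝒲.Nonempty
  · refine ⟨𝒲.attach.inf' (hWne.attach) (fun W => f W.1), ?_, ?_⟩
    · rw [Finset.lt_inf'_iff]
      exact fun W _ => hf W.1 W.2
    · intro W hWsub hWint
      have hWmem : W ∈ 𝒲 := by
        rw [h𝒲, Finset.mem_filter]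
        exact ⟨Finset.mem_powerset.mpr hWsub, hWint⟩
      refine ⟨x W, hx W hWmem, fun y hy => hb W hWmem ?_⟩
      apply Metric.ball_subset_ball _ hy
      exact Finset.inf'_le _ (Finset.mem_attach _ ⟨W, hWmem⟩)
  · refine ⟨1, one_pos, fun W hWsub hWint => absurd ?_ hWne⟩
    exact ⟨W, by rw [h𝒲, Finset.mem_filter]; exact ⟨Finset.mem_powerset.mpr hWsub, hWint⟩⟩

set_option maxHeartbeats 2000000 in
/-- There are `η ≥ 1` and `C > 0` such that for all `δ ∈ M` and `v ∈ V`,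
`e^{⟨s(δ),v⟩} / κ(s(δ)) ≥ C · dist(δ, ∂M)^η`. -/
theorem statement3 (d : ℕ) (p : (Fin d → ℤ) → ℝ) (hp : ∀ v, 0 ≤ p v)
    (hfin : (Function.support p).Finite) (hsum : ∑ᶠ v, p v = 1) (hirr : Irred p) :
    ∃ η : ℝ, 1 ≤ η ∧ ∃ C : ℝ, 0 < C ∧
      ∀ δ ∈ Mset p, ∀ s : E d, gradient (logKappa p) s = δ →
        ∀ v ∈ Function.support p,
          C * Metric.infDist δ (frontier (Mset p)) ^ η ≤
            Real.exp (pairR s (emb v)) / kappa p s := by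
  classical
  by_cases hM : (Mset p).Nonempty
  swap
  · exact ⟨1, le_rfl, 1, one_pos, fun δ hδ => absurd ⟨δ, hδ⟩ hM⟩
  set Vf := hfin.toFinset with hVfdef
  have hVfc : (Vf : Set (Fin d → ℤ)) = Function.support p := hfin.coe_toFinset
  have hsumV : ∑ u ∈ Vf, p u = 1 := by
    rw [← hsum]
    exact (finsum_eq_sum_of_support_subset p (by rw [hVfc])).symm
  have hVne : Vf.Nonempty := by
    rcases Finset.eq_empty_or_nonempty Vf with h | h
    · rw [h] at hsumV; simp at hsumV
    · exact h
  obtain ⟨v₀, hv₀⟩ := id hVne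
  have hppos : ∀ u ∈ Vf, 0 < p u := fun u hu =>
    lt_of_le_of_ne (hp u) (Ne.symm (by simpa using hfin.mem_toFinset.mp hu))
  set pm := Vf.inf' hVne p with hpmdef
  have hpm : 0 < pm := by
    rw [hpmdef, Finset.lt_inf'_iff]
    exact hppos
  have hpm_le : ∀ u ∈ Vf, pm ≤ p u := fun u hu => Finset.inf'_le p hu
  have hpm1 : pm ≤ 1 := by
    refine (Finset.inf'_le p hv₀).trans ?_
    calc p v₀ ≤ ∑ u ∈ Vf, p u := Finset.single_le_sum (fun u _ => hp u) hv₀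
    _ = 1 := hsumV
  set P := convexHull ℝ (emb '' Function.support p) with hPdef
  set R := (Vf ×ˢ Vf).sup' (hVne.product hVne) (fun q => dist (emb q.1) (emb q.2)) with hRdef
  have hRd : ∀ u ∈ Vf, ∀ w ∈ Vf, dist (emb u) (emb w) ≤ R := by
    intro u hu w hw
    have hmem : (u, w) ∈ Vf ×ˢ Vf := Finset.mem_product.mpr ⟨hu, hw⟩
    exact Finset.le_sup'
      (f := fun q : (Fin d → ℤ) × (Fin d → ℤ) => dist (emb q.1) (emb q.2)) hmem
  have hR0 : 0 ≤ R := dist_nonneg.trans (hRd v₀ hv₀ v₀ hv₀)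
  have hPball : P ⊆ closedBall (emb v₀) R := by
    apply convexHull_min _ (convex_closedBall _ _)
    rintro a ⟨u, hu, rfl⟩
    exact mem_closedBall.mpr (hRd u (hfin.mem_toFinset.mpr hu) v₀ hv₀)
  by_cases hF : (frontier (Mset p)).Nonempty
  swap
  · refine ⟨1, le_rfl, 1, one_pos, fun δ hδ s hgrad v hv => ?_⟩
    rw [Set.not_nonempty_iff_eq_empty] at hF
    rw [hF, Metric.infDist_empty, Real.rpow_one, mul_zero]
    exact (div_pos (Real.exp_pos _) (kappa_pos hp hfin hVne s)).le
  have hR : 0 < R := by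
    rcases hR0.lt_or_eq with h | h
    · exact h
    exfalso
    have hall : ∀ u ∈ Vf, u = v₀ := by
      intro u hu
      have hle := hRd u hu v₀ hv₀
      rw [← h] at hle
      have hd0 : dist (emb u) (emb v₀) = 0 := le_antisymm hle dist_nonneg
      have he : emb u = emb v₀ := by rwa [dist_eq_zero] at hd0
      funext i
      have h2 : emb u i = emb v₀ i := by rw [he]
      simp only [emb, PiLp.toLp_apply] at h2
      exact_mod_cast h2
    have hVsing : Vf = {v₀} := Finset.eq_singleton_iff_unique_mem.mpr ⟨hv₀, hall⟩
    have hsupp : Function.support p = {v₀} := by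
      rw [← hVfc, hVsing]; simp
    have hMs : Mset p = interior {emb v₀} := by
      rw [Mset, hsupp, Set.image_singleton, convexHull_singleton]
    have hsub : Mset p ⊆ {emb v₀} := hMs ▸ interior_subset
    have hopen : Mset p = {emb v₀} := (hM.subset_singleton_iff).mp hsub
    have hio : IsOpen ({emb v₀} : Set (E d)) := hopen ▸ (hMs ▸ isOpen_interior)
    have : frontier (Mset p) = ∅ := by
      rw [hopen, hio.frontier_eq, IsClosed.closure_eq isClosed_singleton, Set.diff_self]
    rw [this] at hF
    exact Set.not_nonempty_empty hF
  obtain ⟨ε₁, hε₁, hεprop⟩ := exists_eps1 hfin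
  set K := 2 * R / pm with hKdef
  have hK : 0 < K := by positivity
  set η := max 1 (4 * R / ε₁) with hηdef
  have hη1 : (1 : ℝ) ≤ η := le_max_left _ _
  have hη2 : 4 * R / ε₁ ≤ η := le_max_right _ _
  refine ⟨η, hη1, K ^ (-η), Real.rpow_pos_of_pos hK _, ?_⟩
  intro δ hδ s hgrad v hv
  have hκ : 0 < kappa p s := kappa_pos hp hfin hVne s
  set c : (Fin d → ℤ) → ℝ := fun u => p u * Real.exp (pairR s (emb u)) with hcdef
  have hc_nonneg : ∀ u, 0 ≤ c u := fun u => mul_nonneg (hp u) (Real.exp_nonneg _)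
  have hκc : kappa p s = ∑ u ∈ Vf, c u := kappa_eq hfin s
  have hδeq : δ = (kappa p s)⁻¹ • ∑ u ∈ Vf, c u • emb u := by
    have h := (hasGradientAt_logKappa hp hfin hVne s).gradient
    rw [hgrad] at h
    exact h
  set m := Vf.sup' hVne (fun u => pairR s (emb u)) with hmdef
  set mi := Vf.inf' hVne (fun u => pairR s (emb u)) with hmidef
  set H := m - mi with hHdef
  have hH0 : 0 ≤ H := by
    have h1 : mi ≤ pairR s (emb v₀) := by
      rw [hmidef]; exact Finset.inf'_le (fun u => pairR s (emb u)) hv₀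
    have h2 : pairR s (emb v₀) ≤ m := by
      rw [hmdef]; exact Finset.le_sup' (fun u => pairR s (emb u)) hv₀
    rw [hHdef]; linarith
  have hvVf : v ∈ Vf := hfin.mem_toFinset.mpr hv
  have hκm : kappa p s ≤ Real.exp m := by
    rw [hκc]
    calc ∑ u ∈ Vf, c u ≤ ∑ u ∈ Vf, p u * Real.exp m := by
          apply Finset.sum_le_sum
          intro u hu
          exact mul_le_mul_of_nonneg_left
            (Real.exp_le_exp.mpr (Finset.le_sup' (fun u => pairR s (emb u)) hu)) (hp u)
    _ = Real.exp m := by rw [← Finset.sum_mul, hsumV, one_mul]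
  have hlow : Real.exp (-H) ≤ Real.exp (pairR s (emb v)) / kappa p s := by
    have h1 : Real.exp (-H) = Real.exp mi / Real.exp m := by
      rw [← Real.exp_sub]; congr 1; rw [hHdef]; ring
    rw [h1]
    exact div_le_div₀ (Real.exp_nonneg _)
      (Real.exp_le_exp.mpr (Finset.inf'_le (fun u => pairR s (emb u)) hvVf)) hκ hκm
  have hr0 : (0 : ℝ) ≤ Metric.infDist δ (frontier (Mset p)) := Metric.infDist_nonneg
  set r := Metric.infDist δ (frontier (Mset p)) with hrdef
  have hδP : δ ∈ P := interior_subset hδ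
  have hr2R : r ≤ 2 * R := by
    obtain ⟨y₀, hy₀⟩ := hF
    have hy₀c : y₀ ∈ closedBall (emb v₀) R := by
      apply closure_minimal hPball Metric.isClosed_closedBall
      exact (closure_mono interior_subset) (frontier_subset_closure hy₀)
    calc r ≤ dist δ y₀ := Metric.infDist_le_dist_of_mem hy₀
    _ ≤ dist δ (emb v₀) + dist (emb v₀) y₀ := dist_triangle _ _ _
    _ ≤ R + R := add_le_add (mem_closedBall.mp (hPball hδP))
          (by rw [dist_comm]; exact mem_closedBall.mp hy₀c)
    _ = 2 * R := by ring
  have hclaim : r ≤ K * Real.exp (-(ε₁ / (4 * R)) * H) := by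
    rcases eq_or_lt_of_le hH0 with hH | hH
    · rw [← hH, mul_zero, Real.exp_zero, mul_one]
      refine hr2R.trans ?_
      rw [hKdef, le_div_iff₀ hpm]
      nlinarith
    · have hs0 : s ≠ 0 := by
        intro h
        have hz : ∀ u : Fin d → ℤ, pairR s (emb u) = 0 := by
          intro u; rw [h]; simp [pairR]
        have hm0 : m = 0 := by
          rw [hmdef]
          rw [show (fun u => pairR s (emb u)) = fun _ : Fin d → ℤ => (0:ℝ) from funext hz]
          exact Finset.sup'_const _ _
        have hmi0 : mi = 0 := by
          rw [hmidef]
          rw [show (fun u => pairR s (emb u)) = fun _ : Fin d → ℤ => (0:ℝ) from funext hz]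
          exact Finset.inf'_const _ _
        rw [hHdef, hm0, hmi0] at hH
        simp at hH
      have ht : 0 < ‖s‖ := norm_pos_iff.mpr hs0
      set t := ‖s‖ with htdef
      set τ := ε₁ * H / (4 * R) with hτdef
      have hτpos : 0 < τ := by positivity
      set S := Vf.filter (fun u => m - τ ≤ pairR s (emb u)) with hSdef
      have hSsub : S ⊆ Vf := Finset.filter_subset _ _
      obtain ⟨umax, humax, hmeq⟩ := Finset.exists_mem_eq_sup' hVne (fun u => pairR s (emb u))
      rw [← hmdef] at hmeq
      have humaxS : umax ∈ S := by
        rw [hSdef, Finset.mem_filter]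
        refine ⟨humax, ?_⟩
        rw [hmeq]
        linarith
      by_cases hS : (convexHull ℝ (emb '' (S : Set (Fin d → ℤ))) ∩ Mset p).Nonempty
      · exfalso
        obtain ⟨xS, hxS, hball⟩ := hεprop S hSsub hS
        have hyball : xS + (ε₁ / (2 * t)) • s ∈ Metric.ball xS ε₁ := by
          rw [Metric.mem_ball, dist_eq_norm]
          have : xS + (ε₁ / (2 * t)) • s - xS = (ε₁ / (2 * t)) • s := by abel
          rw [this, norm_smul, Real.norm_eq_abs, abs_of_pos (by positivity), ← htdef]
          have ht' : t ≠ 0 := ne_of_gt ht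
          have hlt : ε₁ / (2 * t) * t = ε₁ / 2 := by field_simp
          rw [hlt]
          linarith
        have hyP : xS + (ε₁ / (2 * t)) • s ∈ P := hball hyball
        have h1 : pairR s (xS + (ε₁ / (2 * t)) • s) ≤ m := by
          apply pair_le_of_mem_hull _ hyP
          rintro a ⟨u, hu, rfl⟩
          exact Finset.le_sup' (fun u => pairR s (emb u)) (hfin.mem_toFinset.mpr hu)
        have h2 : m - τ ≤ pairR s xS := by
          apply pair_ge_of_mem_hull _ hxS
          rintro a ⟨u, hu, rfl⟩
          have : u ∈ S := hu
          rw [hSdef, Finset.mem_filter] at this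
          exact this.2
        have h3 : pairR s (xS + (ε₁ / (2 * t)) • s)
            = pairR s xS + (ε₁ / (2 * t)) * t ^ 2 := by
          simp only [pairR_inner]
          rw [inner_add_right, real_inner_smul_right, real_inner_self_eq_norm_sq]
        have h4 : ε₁ * t / 2 ≤ τ := by
          have he : (ε₁ / (2 * t)) * t ^ 2 = ε₁ * t / 2 := by field_simp
          rw [h3, he] at h1
          linarith
        obtain ⟨umin, humin, hmineq⟩ := Finset.exists_mem_eq_inf' hVne (fun u => pairR s (emb u))
        rw [← hmidef] at hmineq
        have h5 : H ≤ t * R := by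
          have hHeq : H = pairR s (emb umax) - pairR s (emb umin) := by
            rw [hHdef, hmdef, hmidef, ← hmeq, ← hmineq]
          have hcs : pairR s (emb umax) - pairR s (emb umin) ≤ t * ‖emb umax - emb umin‖ := by
            have heq : pairR s (emb umax) - pairR s (emb umin)
                = (inner ℝ s (emb umax - emb umin) : ℝ) := by
              simp only [pairR_inner]; rw [inner_sub_right]
            rw [heq]
            exact real_inner_le_norm s _
          have hdd : ‖emb umax - emb umin‖ ≤ R := by
            rw [← dist_eq_norm]; exact hRd umax humax umin humin
          calc H ≤ t * ‖emb umax - emb umin‖ := hHeq ▸ hcs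
          _ ≤ t * R := mul_le_mul_of_nonneg_left hdd ht.le
        rw [hτdef, le_div_iff₀ (by positivity)] at h4
        nlinarith [mul_le_mul_of_nonneg_left h5 hε₁.le]
      · -- boundary case
        set W := ∑ u ∈ S, c u with hWdef
        have hW : 0 < W := by
          rw [hWdef]
          apply Finset.sum_pos' (fun u _ => hc_nonneg u)
          refine ⟨umax, humaxS, ?_⟩
          exact mul_pos (hppos umax humax) (Real.exp_pos _)
        set δ' := W⁻¹ • ∑ u ∈ S, c u • emb u with hδ'def
        have hδ'conv : δ' ∈ convexHull ℝ (emb '' (S : Set (Fin d → ℤ))) := by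
          have := Finset.centerMass_mem_convexHull S (w := c) (z := emb)
            (fun u _ => hc_nonneg u) (by rw [← hWdef]; exact hW)
            (fun u hu => Set.mem_image_of_mem emb (Finset.mem_coe.mpr hu))
          rwa [Finset.centerMass, ← hWdef, ← hδ'def] at this
        have hδ'P : δ' ∈ P := by
          apply convexHull_mono _ hδ'conv
          apply Set.image_mono
          rw [← hVfc]
          exact fun u hu => hSsub hu
        have hδ'F : δ' ∈ frontier (Mset p) := by
          have hMopen : IsOpen (Mset p) := isOpen_interior
          rw [hMopen.frontier_eq]
          constructor
          · obtain ⟨y₁, hy₁⟩ := hM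
            rw [Metric.mem_closure_iff]
            intro ε hε
            set tt := min 1 (ε / (‖y₁ - δ'‖ + 1)) with httdef
            have htt0 : 0 < tt := lt_min one_pos (by positivity)
            have htt1 : tt ≤ 1 := min_le_left _ _
            refine ⟨δ' + tt • (y₁ - δ'), ?_, ?_⟩
            · exact (convex_convexHull ℝ _).add_smul_sub_mem_interior hδ'P hy₁ ⟨htt0, htt1⟩
            · rw [dist_eq_norm]
              have : δ' - (δ' + tt • (y₁ - δ')) = -(tt • (y₁ - δ')) := by abel
              rw [this, norm_neg, norm_smul, Real.norm_eq_abs, abs_of_pos htt0]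
              calc tt * ‖y₁ - δ'‖ ≤ (ε / (‖y₁ - δ'‖ + 1)) * ‖y₁ - δ'‖ :=
                    mul_le_mul_of_nonneg_right (min_le_right _ _) (norm_nonneg _)
              _ < ε := by
                  rw [div_mul_eq_mul_div, div_lt_iff₀ (by positivity)]
                  nlinarith [norm_nonneg (y₁ - δ'), hε]
          · intro hmem
            exact hS ⟨δ', hδ'conv, hmem⟩
        have hrd : r ≤ ‖δ - δ'‖ := by
          rw [← dist_eq_norm]
          exact Metric.infDist_le_dist_of_mem hδ'F
        have hδsum : δ = ∑ u ∈ Vf, (c u / kappa p s) • emb u := by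
          rw [hδeq, Finset.smul_sum]
          apply Finset.sum_congr rfl
          intro u _
          rw [smul_smul, div_eq_inv_mul]
        have hkey : δ - δ' = ∑ u ∈ Vf \ S, (c u / kappa p s) • (emb u - δ') := by
          have hsplit : ∑ u ∈ Vf, (c u / kappa p s) • emb u
              = ∑ u ∈ Vf \ S, (c u / kappa p s) • emb u
                + ∑ u ∈ S, (c u / kappa p s) • emb u := (Finset.sum_sdiff hSsub).symm
          have hSpart : ∑ u ∈ S, (c u / kappa p s) • emb u = (W / kappa p s) • δ' := by
            rw [hδ'def, smul_smul]
            have : W / kappa p s * W⁻¹ = (kappa p s)⁻¹ := by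
              field_simp
            rw [this, Finset.smul_sum]
            apply Finset.sum_congr rfl
            intro u _
            rw [smul_smul, div_eq_inv_mul]
          have hwsum : ∑ u ∈ Vf, c u / kappa p s = 1 := by
            rw [← Finset.sum_div, ← hκc, div_self (ne_of_gt hκ)]
          have hsplitw : ∑ u ∈ Vf \ S, c u / kappa p s = 1 - W / kappa p s := by
            have := Finset.sum_sdiff (f := fun u => c u / kappa p s) hSsub
            rw [hwsum] at this
            have hWs : ∑ u ∈ S, c u / kappa p s = W / kappa p s := by
              rw [hWdef, Finset.sum_div]
            rw [hWs] at this
            linarith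
          calc δ - δ'
              = (∑ u ∈ Vf \ S, (c u / kappa p s) • emb u + (W / kappa p s) • δ') - δ' := by
                rw [hδsum, hsplit, hSpart]
          _ = ∑ u ∈ Vf \ S, (c u / kappa p s) • emb u - (1 - W / kappa p s) • δ' := by
                rw [sub_smul, one_smul]; abel
          _ = ∑ u ∈ Vf \ S, (c u / kappa p s) • emb u
                - (∑ u ∈ Vf \ S, c u / kappa p s) • δ' := by rw [hsplitw]
          _ = ∑ u ∈ Vf \ S, ((c u / kappa p s) • emb u - (c u / kappa p s) • δ') := by
                rw [Finset.sum_sub_distrib, Finset.sum_smul]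
          _ = ∑ u ∈ Vf \ S, (c u / kappa p s) • (emb u - δ') := by
                apply Finset.sum_congr rfl
                intro u _
                rw [smul_sub]
        have hembP : ∀ u ∈ Vf, emb u ∈ P := by
          intro u hu
          apply subset_convexHull
          exact Set.mem_image_of_mem emb (by rwa [← hfin.mem_toFinset])
        have hbound : ‖δ - δ'‖ ≤ (∑ u ∈ Vf \ S, c u / kappa p s) * (2 * R) := by
          rw [hkey]
          calc ‖∑ u ∈ Vf \ S, (c u / kappa p s) • (emb u - δ')‖
              ≤ ∑ u ∈ Vf \ S, ‖(c u / kappa p s) • (emb u - δ')‖ := norm_sum_le _ _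
          _ ≤ ∑ u ∈ Vf \ S, (c u / kappa p s) * (2 * R) := by
              apply Finset.sum_le_sum
              intro u hu
              rw [norm_smul, Real.norm_eq_abs, abs_of_nonneg (div_nonneg (hc_nonneg u) hκ.le)]
              apply mul_le_mul_of_nonneg_left _ (div_nonneg (hc_nonneg u) hκ.le)
              have h1 : dist (emb u) δ' ≤ dist (emb u) (emb v₀) + dist (emb v₀) δ' :=
                dist_triangle _ _ _
              have h2 : dist (emb u) (emb v₀) ≤ R :=
                hRd u ((Finset.mem_sdiff.mp hu).1) v₀ hv₀
              have h3 : dist (emb v₀) δ' ≤ R := by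
                rw [dist_comm]; exact mem_closedBall.mp (hPball hδ'P)
              rw [← dist_eq_norm]
              linarith
          _ = (∑ u ∈ Vf \ S, c u / kappa p s) * (2 * R) := by rw [Finset.sum_mul]
        have hκlb : pm * Real.exp m ≤ kappa p s := by
          rw [hκc]
          calc pm * Real.exp m = pm * Real.exp (pairR s (emb umax)) := by rw [← hmeq]
          _ ≤ c umax := by
              rw [hcdef]
              exact mul_le_mul_of_nonneg_right (hpm_le umax humax) (Real.exp_nonneg _)
          _ ≤ ∑ u ∈ Vf, c u := Finset.single_le_sum (fun u _ => hc_nonneg u) humax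
        have hwub : ∑ u ∈ Vf \ S, c u / kappa p s ≤ Real.exp (-τ) / pm := by
          calc ∑ u ∈ Vf \ S, c u / kappa p s
              ≤ ∑ u ∈ Vf \ S, (p u / pm) * Real.exp (-τ) := by
                apply Finset.sum_le_sum
                intro u hu
                have hu1 : u ∈ Vf := (Finset.mem_sdiff.mp hu).1
                have hu2 : pairR s (emb u) < m - τ := by
                  have hnot := (Finset.mem_sdiff.mp hu).2
                  rw [hSdef, Finset.mem_filter] at hnot
                  push_neg at hnot
                  exact hnot hu1
                have hstep : c u / kappa p s
                    ≤ (p u * Real.exp (m - τ)) / (pm * Real.exp m) := by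
                  apply div_le_div₀ (mul_nonneg (hp u) (Real.exp_nonneg _))
                  · rw [hcdef]
                    exact mul_le_mul_of_nonneg_left (Real.exp_le_exp.mpr hu2.le) (hp u)
                  · positivity
                  · exact hκlb
                have heq2 : (p u * Real.exp (m - τ)) / (pm * Real.exp m)
                    = (p u / pm) * Real.exp (-τ) := by
                  rw [Real.exp_sub, Real.exp_neg]
                  field_simp
                rw [heq2] at hstep
                exact hstep
          _ = (∑ u ∈ Vf \ S, p u) / pm * Real.exp (-τ) := by
                rw [Finset.sum_div, Finset.sum_mul]
          _ ≤ 1 / pm * Real.exp (-τ) := by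
                apply mul_le_mul_of_nonneg_right _ (Real.exp_nonneg _)
                apply (div_le_div_iff_of_pos_right hpm).mpr
                calc ∑ u ∈ Vf \ S, p u ≤ ∑ u ∈ Vf, p u :=
                      Finset.sum_le_sum_of_subset_of_nonneg Finset.sdiff_subset
                        (fun u _ _ => hp u)
                _ = 1 := hsumV
          _ = Real.exp (-τ) / pm := by ring
        have hfinal : r ≤ K * Real.exp (-τ) := by
          calc r ≤ ‖δ - δ'‖ := hrd
          _ ≤ (∑ u ∈ Vf \ S, c u / kappa p s) * (2 * R) := hbound
          _ ≤ (Real.exp (-τ) / pm) * (2 * R) :=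
              mul_le_mul_of_nonneg_right hwub (by positivity)
          _ = K * Real.exp (-τ) := by rw [hKdef]; ring
        have hexp : -(ε₁ / (4 * R)) * H = -τ := by rw [hτdef]; ring
        rw [hexp]
        exact hfinal
  -- conclude
  refine le_trans ?_ hlow
  rcases eq_or_lt_of_le hr0 with hr | hr
  · rw [← hr, Real.zero_rpow (by linarith : η ≠ 0), mul_zero]
    exact (Real.exp_pos _).le
  · have hrK : r / K ≤ Real.exp (-(ε₁ / (4 * R)) * H) := by
      rw [div_le_iff₀ hK]
      linarith [hclaim]
    have hexp0 : -(ε₁ / (4 * R)) * H ≤ 0 := by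
      apply mul_nonpos_of_nonpos_of_nonneg _ hH0
      have : 0 ≤ ε₁ / (4 * R) := by positivity
      linarith
    have hrK1 : r / K ≤ 1 := hrK.trans (Real.exp_le_one_iff.mpr hexp0)
    have hCr : K ^ (-η) * r ^ η = (r / K) ^ η := by
      rw [Real.div_rpow hr0 hK.le, Real.rpow_neg hK.le]
      ring
    rw [hCr]
    calc (r / K) ^ η ≤ (r / K) ^ (4 * R / ε₁) :=
          Real.rpow_le_rpow_of_exponent_ge (div_pos hr hK) hrK1 hη2
    _ ≤ (Real.exp (-(ε₁ / (4 * R)) * H)) ^ (4 * R / ε₁) :=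
          Real.rpow_le_rpow (div_pos hr hK).le hrK (by positivity)
    _ = Real.exp (-(ε₁ / (4 * R)) * H * (4 * R / ε₁)) := by
          rw [Real.rpow_def_of_pos (Real.exp_pos _), Real.log_exp]
    _ = Real.exp (-H) := by
          congr 1
          field_simp

end RWalk
end
end

section
/- Let p be the step distribution of an irreducible random walk on ℤ^d with finite support V and period r, and let U = {θ ∈ [−π, π)^d : |κ(iθ)| = 1}. Then: (i) for every θ₀ ∈ U there is t ∈ [−π,π) with κ(iθ₀) = e^{it}, and e^{i⟨θ₀, v⟩} = e^{it} for every v ∈ V; (ii) κ(iθ₀)^r = 1 for every θ₀ ∈ U; and (iii) U has exactly r elements. -/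
/- Framework for random walks on the integer lattice ℤ^d. -/

noncomputable section

namespace RWalk

/-- The exponential polynomial `κ` extended to `ℂ^d`. -/
def kappaC {d : ℕ} (p : (Fin d → ℤ) → ℝ) (z : Fin d → ℂ) : ℂ :=
  ∑ᶠ v : Fin d → ℤ, (p v : ℂ) * Complex.exp (∑ i, z i * (v i : ℂ))

/-- `U = {θ ∈ [-π,π)^d : |κ(iθ)| = 1}`. -/
def Uset {d : ℕ} (p : (Fin d → ℤ) → ℝ) : Set (E d) :=
  {θ | (∀ i, θ i ∈ Set.Ico (-Real.pi) Real.pi) ∧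
    ‖kappaC p (fun i => (θ i : ℂ) * Complex.I)‖ = 1}

variable {d : ℕ} {p : (Fin d → ℤ) → ℝ}

lemma tfun_nonneg (hp : ∀ v, 0 ≤ p v) : ∀ n x, 0 ≤ tfun p n x
  | 0, x => by simp only [tfun]; split <;> norm_num
  | n+1, x => finsum_nonneg fun y => mul_nonneg (tfun_nonneg hp n y) (hp _)

lemma tfun_zero_pos {x : Fin d → ℤ} (h : 0 < tfun p 0 x) : x = 0 := by
  by_contra hx; simp only [tfun, if_neg hx] at h; exact lt_irrefl 0 h

lemma tfun_zero_zero : tfun p 0 (0 : Fin d → ℤ) = 1 := by simp [tfun]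

lemma tfun_support_finite (hfin : (Function.support p).Finite) :
    ∀ n, (Function.support (tfun p n)).Finite
  | 0 => (Set.finite_singleton 0).subset (fun x hx => by
      by_contra hx0
      simp only [Function.mem_support, tfun, if_neg (by simpa using hx0)] at hx
      exact hx rfl)
  | n+1 => (((tfun_support_finite hfin n).add hfin)).subset (fun x hx => by
      simp only [Function.mem_support, tfun] at hx
      by_contra hmem
      apply hx
      apply finsum_eq_zero_of_forall_eq_zero
      intro y
      rcases eq_or_ne (tfun p n y) 0 with h | h
      · rw [h, zero_mul]
      · rcases eq_or_ne (p (x - y)) 0 with h2 | h2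
        · rw [h2, mul_zero]
        · exfalso
          apply hmem
          have hxy : y + (x - y) = x := by abel
          rw [← hxy]
          exact Set.add_mem_add (Function.mem_support.2 h) (Function.mem_support.2 h2))

lemma tfun_step (hp : ∀ v, 0 ≤ p v) (hfin : (Function.support p).Finite)
    {n : ℕ} {x v : Fin d → ℤ} (hx : 0 < tfun p n x) (hv : 0 < p v) :
    0 < tfun p (n+1) (x + v) := by
  have hsub : Function.support (fun y => tfun p n y * p (x + v - y)) ⊆
      Function.support (tfun p n) := fun y hy => by
    simp only [Function.mem_support] at hy ⊢
    exact fun h => hy (by rw [h, zero_mul])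
  have hle : tfun p n x * p (x + v - x) ≤ tfun p (n+1) (x+v) :=
    single_le_finsum x ((tfun_support_finite hfin n).subset hsub)
      (fun y => mul_nonneg (tfun_nonneg hp n y) (hp _))
  have : x + v - x = v := by abel
  rw [this] at hle
  exact lt_of_lt_of_le (mul_pos hx hv) hle

lemma tfun_pos_elim (hp : ∀ v, 0 ≤ p v) {n : ℕ} {x : Fin d → ℤ}
    (h : 0 < tfun p (n+1) x) : ∃ y, 0 < tfun p n y ∧ 0 < p (x - y) := by
  by_contra hc
  push_neg at hc
  have : tfun p (n+1) x = 0 := by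
    apply finsum_eq_zero_of_forall_eq_zero
    intro y
    rcases (tfun_nonneg hp n y).lt_or_eq with h1 | h1
    · have := hc y h1
      have := hp (x - y)
      have : p (x - y) = 0 := le_antisymm (hc y h1) (hp _)
      rw [this, mul_zero]
    · rw [← h1, zero_mul]
  rw [this] at h; exact lt_irrefl 0 h

lemma tfun_conv (hp : ∀ v, 0 ≤ p v) (hfin : (Function.support p).Finite) :
    ∀ {b a : ℕ} {x y : Fin d → ℤ}, 0 < tfun p a x → 0 < tfun p b y →
      0 < tfun p (a+b) (x+y)
  | 0, a, x, y, ha, hb => by rw [tfun_zero_pos hb, add_zero, add_zero]; exact ha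
  | b+1, a, x, y, ha, hb => by
    obtain ⟨w, hw, hpw⟩ := tfun_pos_elim hp hb
    have h1 : 0 < tfun p (a+b) (x+w) := tfun_conv hp hfin ha hw
    have h2 := tfun_step hp hfin h1 hpw
    have e1 : x + w + (y - w) = x + y := by abel
    rw [e1] at h2
    exact h2

lemma tfun_one {v : Fin d → ℤ} : tfun p 1 v = p v := by
  show (∑ᶠ y : Fin d → ℤ, tfun p 0 y * p (v - y)) = p v
  rw [finsum_eq_single _ (0 : Fin d → ℤ)]
  · simp [tfun]
  · intro y hy; simp [tfun, hy]
lemma pairR_emb_add (θ : E d) (a b : Fin d → ℤ) :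
    pairR θ (emb (a + b)) = pairR θ (emb a) + pairR θ (emb b) := by
  unfold pairR emb
  simp only [WithLp.ofLp_toLp]
  rw [← Finset.sum_add_distrib]
  refine Finset.sum_congr rfl fun i _ => ?_
  have : (a + b) i = a i + b i := rfl
  rw [this]; push_cast; ring

lemma pairR_emb_zero (θ : E d) : pairR θ (emb (0 : Fin d → ℤ)) = 0 := by
  unfold pairR emb
  simp

lemma kappaC_eq (hfin : (Function.support p).Finite) (θ : E d) :
    kappaC p (fun i => (θ i : ℂ) * Complex.I)
      = ∑ v ∈ hfin.toFinset,
          (p v : ℂ) * Complex.exp ((pairR θ (emb v) : ℂ) * Complex.I) := by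
  unfold kappaC
  rw [finsum_eq_finset_sum_of_support_subset]
  · refine Finset.sum_congr rfl fun v _ => ?_
    congr 2
    unfold pairR emb
    simp only [WithLp.ofLp_toLp]
    push_cast
    rw [Finset.sum_mul]
    exact Finset.sum_congr rfl fun i _ => by ring
  · intro v hv
    simp only [Function.mem_support, Set.Finite.coe_toFinset] at hv ⊢
    intro hpv
    exact hv (by rw [hpv]; norm_num)

lemma sum_p_eq_one (hfin : (Function.support p).Finite) (hsum : ∑ᶠ v, p v = 1) :
    ∑ v ∈ hfin.toFinset, p v = 1 := by
  rw [← hsum, finsum_eq_finset_sum_of_support_subset]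
  rw [Set.Finite.coe_toFinset]

lemma re_one_of_norm_one {u : ℂ} (hn : ‖u‖ = 1) (hr : u.re = 1) : u = 1 := by
  have h1 : u.re ^ 2 + u.im ^ 2 = 1 := by
    have h2 := Complex.sq_norm u
    rw [Complex.normSq_apply, hn] at h2
    nlinarith [h2]
  have : u.im = 0 := by nlinarith
  exact Complex.ext (by simp [hr]) (by simp [this])

/-- Triangle-inequality equality case. -/
lemma exp_eq_kappa (hp : ∀ v, 0 ≤ p v) (hfin : (Function.support p).Finite)
    (hsum : ∑ᶠ v, p v = 1) {θ : E d}
    (hU : ‖kappaC p (fun i => (θ i : ℂ) * Complex.I)‖ = 1) :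
    ∀ v ∈ Function.support p,
      Complex.exp ((pairR θ (emb v) : ℂ) * Complex.I)
        = kappaC p (fun i => (θ i : ℂ) * Complex.I) := by
  set c := kappaC p (fun i => (θ i : ℂ) * Complex.I) with hc
  set f : (Fin d → ℤ) → ℂ := fun v => Complex.exp ((pairR θ (emb v) : ℂ) * Complex.I) with hf
  have hfn : ∀ v, ‖f v‖ = 1 := fun v => by
    simp [hf, Complex.norm_exp]
  have hkey : ∑ v ∈ hfin.toFinset, p v * ((starRingEnd ℂ) c * f v).re = 1 := by
    have h1 : ((starRingEnd ℂ) c * c) = 1 := by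
      rw [mul_comm, Complex.mul_conj]
      norm_cast
      rw [Complex.normSq_eq_norm_sq, hU]; norm_num
    have h2 : (starRingEnd ℂ) c * c
        = ∑ v ∈ hfin.toFinset, (p v : ℂ) * ((starRingEnd ℂ) c * f v) := by
      rw [hc, kappaC_eq hfin θ, Finset.mul_sum]
      exact Finset.sum_congr rfl fun v _ => by ring
    have := congrArg Complex.re (h2.symm.trans h1)
    rw [Complex.re_sum] at this
    simpa [Complex.re_ofReal_mul] using this
  have hbd : ∀ v, ((starRingEnd ℂ) c * f v).re ≤ 1 := fun v => by
    calc ((starRingEnd ℂ) c * f v).re ≤ ‖(starRingEnd ℂ) c * f v‖ := Complex.re_le_norm _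
    _ = ‖c‖ * ‖f v‖ := by rw [norm_mul, RCLike.norm_conj]
    _ = 1 := by rw [hU, hfn]; norm_num
  have hzero : ∑ v ∈ hfin.toFinset, p v * (1 - ((starRingEnd ℂ) c * f v).re) = 0 := by
    have := sum_p_eq_one hfin hsum
    rw [Finset.sum_congr rfl fun v _ => (mul_sub (p v) 1 _), Finset.sum_sub_distrib]
    simp only [mul_one]
    rw [this, hkey, sub_self]
  have hall := (Finset.sum_eq_zero_iff_of_nonneg (fun v _ =>
    mul_nonneg (hp v) (by linarith [hbd v]))).1 hzero
  intro v hv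
  have hvF : v ∈ hfin.toFinset := hfin.mem_toFinset.2 hv
  have hpv : p v ≠ 0 := hv
  have h3 : (1 : ℝ) - ((starRingEnd ℂ) c * f v).re = 0 := by
    have := hall v hvF
    rcases mul_eq_zero.1 this with h | h
    · exact absurd h hpv
    · exact h
  have hre : ((starRingEnd ℂ) c * f v).re = 1 := by linarith
  have hnorm : ‖(starRingEnd ℂ) c * f v‖ = 1 := by
    rw [norm_mul, RCLike.norm_conj, hU, hfn]; norm_num
  have := re_one_of_norm_one hnorm hre
  -- conj c * f v = 1  ⇒ f v = c
  have hcc : c * ((starRingEnd ℂ) c * f v) = c * 1 := by rw [this]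
  rw [← mul_assoc, Complex.mul_conj, Complex.normSq_eq_norm_sq, hU] at hcc
  simpa using hcc

/-- Character lemma. -/
lemma char_of_tfun (hp : ∀ v, 0 ≤ p v) {θ : E d} {t : ℝ}
    (hv : ∀ v ∈ Function.support p,
      Complex.exp ((pairR θ (emb v) : ℂ) * Complex.I) = Complex.exp (t * Complex.I)) :
    ∀ n x, 0 < tfun p n x →
      Complex.exp ((pairR θ (emb x) : ℂ) * Complex.I)
        = Complex.exp (((n : ℝ) * t : ℝ) * Complex.I)
  | 0, x, h => by
    rw [tfun_zero_pos h, pairR_emb_zero]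
    norm_num
  | n+1, x, h => by
    obtain ⟨y, hy, hpy⟩ := tfun_pos_elim hp h
    have hx : x = y + (x - y) := by abel
    have e1 : pairR θ (emb x) = pairR θ (emb y) + pairR θ (emb (x - y)) := by
      conv_lhs => rw [hx]
      exact pairR_emb_add θ y (x - y)
    rw [e1]
    push_cast
    rw [add_mul, Complex.exp_add, char_of_tfun hp hv n y hy,
        hv (x - y) (Function.mem_support.2 hpy.ne'), ← Complex.exp_add]
    congr 1
    push_cast
    ring

lemma exp_I_inj {s u : ℝ} (hs : s ∈ Set.Ico (-Real.pi) Real.pi)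
    (hu : u ∈ Set.Ico (-Real.pi) Real.pi)
    (h : Complex.exp ((s:ℂ) * Complex.I) = Complex.exp ((u:ℂ) * Complex.I)) : s = u := by
  obtain ⟨n, hn⟩ := Complex.exp_eq_exp_iff_exists_int.1 h
  have hr : ((s - u - n * (2 * Real.pi) : ℝ) : ℂ) * Complex.I = 0 := by
    push_cast
    linear_combination hn
  rcases mul_eq_zero.1 hr with h0 | h0
  · have : s - u - n * (2 * Real.pi) = 0 := by exact_mod_cast h0
    have hpi := Real.pi_pos
    have h1 : |s - u| < 2 * Real.pi := by
      rcases hs with ⟨hs1, hs2⟩; rcases hu with ⟨hu1, hu2⟩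
      rw [abs_lt]; constructor <;> linarith
    have h3 : s - u = n * (2 * Real.pi) := by linarith
    have habs := abs_lt.1 h1
    have hn0 : n = 0 := by
      rcases lt_trichotomy n 0 with hlt | heq | hgt
      · have hle : (n : ℝ) ≤ -1 := by
          have : n ≤ -1 := by omega
          exact_mod_cast this
        nlinarith [habs.1, habs.2]
      · exact heq
      · have hle : (1 : ℝ) ≤ (n : ℝ) := by exact_mod_cast hgt
        nlinarith [habs.1, habs.2]
    rw [hn0] at this
    push_cast at this
    linarith
  · exact absurd h0 Complex.I_ne_zero

lemma part_i (hp : ∀ v, 0 ≤ p v) (hfin : (Function.support p).Finite)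
    (hsum : ∑ᶠ v, p v = 1) {θ₀ : E d} (hθ : θ₀ ∈ Uset p) :
    ∃ t : ℝ, t ∈ Set.Ico (-Real.pi) Real.pi ∧
      kappaC p (fun i => (θ₀ i : ℂ) * Complex.I) = Complex.exp (t * Complex.I) ∧
      ∀ v ∈ Function.support p,
        Complex.exp ((pairR θ₀ (emb v) : ℂ) * Complex.I) = Complex.exp (t * Complex.I) := by
  have hU : ‖kappaC p (fun i => (θ₀ i : ℂ) * Complex.I)‖ = 1 := hθ.2
  have hcarg : kappaC p (fun i => (θ₀ i : ℂ) * Complex.I)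
      = Complex.exp ((Complex.arg (kappaC p (fun i => (θ₀ i : ℂ) * Complex.I)) : ℂ)
        * Complex.I) := by
    conv_lhs => rw [← Complex.norm_mul_exp_arg_mul_I (kappaC p (fun i => (θ₀ i : ℂ) * Complex.I))]
    rw [hU]
    norm_num
  set ag := Complex.arg (kappaC p (fun i => (θ₀ i : ℂ) * Complex.I)) with hagdef
  have hpi := Real.pi_pos
  rcases eq_or_ne ag Real.pi with hargpi | hargpi
  · have hval : kappaC p (fun i => (θ₀ i : ℂ) * Complex.I)
        = Complex.exp (((-Real.pi : ℝ) : ℂ) * Complex.I) := by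
      rw [hcarg, hargpi]
      push_cast
      rw [neg_mul, Complex.exp_neg, Complex.exp_pi_mul_I]
      norm_num
    refine ⟨-Real.pi, ⟨le_refl _, by linarith⟩, hval, ?_⟩
    intro v hv
    rw [exp_eq_kappa hp hfin hsum hU v hv, hval]
  · refine ⟨ag, ⟨le_of_lt (Complex.neg_pi_lt_arg _),
      lt_of_le_of_ne (Complex.arg_le_pi _) hargpi⟩, hcarg, ?_⟩
    intro v hv
    rw [exp_eq_kappa hp hfin hsum hU v hv, hcarg]

lemma part_ii (hp : ∀ v, 0 ≤ p v) (hfin : (Function.support p).Finite)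
    (hsum : ∑ᶠ v, p v = 1) {r : ℕ}
    (hr2 : ∀ m : ℕ, (∀ n : ℕ, 0 < n → 0 < tfun p n 0 → m ∣ n) → m ∣ r)
    {θ₀ : E d} (hθ : θ₀ ∈ Uset p) :
    kappaC p (fun i => (θ₀ i : ℂ) * Complex.I) ^ r = 1 := by
  obtain ⟨t, htI, hte, htv⟩ := part_i hp hfin hsum hθ
  set c := kappaC p (fun i => (θ₀ i : ℂ) * Complex.I) with hcdef
  have hpow : ∀ n : ℕ, 0 < tfun p n 0 → c ^ n = 1 := by
    intro n hn
    have := char_of_tfun hp htv n 0 hn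
    rw [pairR_emb_zero] at this
    simp only [Complex.ofReal_zero, zero_mul, Complex.exp_zero] at this
    rw [hte, ← Complex.exp_nat_mul]
    have e : ((n : ℂ) * ((t : ℂ) * Complex.I)) = (((n : ℝ) * t : ℝ) : ℂ) * Complex.I := by
      push_cast; ring
    rw [e, ← this]
  have hm : orderOf c ∣ r := hr2 (orderOf c) fun n hn hpos =>
    orderOf_dvd_of_pow_eq_one (hpow n hpos)
  exact orderOf_dvd_iff_pow_eq_one.1 hm

lemma kappa_inj (hp : ∀ v, 0 ≤ p v) (hfin : (Function.support p).Finite)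
    (hsum : ∑ᶠ v, p v = 1) (hirr : Irred p) {θ₁ θ₂ : E d}
    (h1 : θ₁ ∈ Uset p) (h2 : θ₂ ∈ Uset p)
    (he : kappaC p (fun i => (θ₁ i : ℂ) * Complex.I)
        = kappaC p (fun i => (θ₂ i : ℂ) * Complex.I)) :
    θ₁ = θ₂ := by
  obtain ⟨t₁, ht₁I, ht₁e, ht₁v⟩ := part_i hp hfin hsum h1
  obtain ⟨t₂, ht₂I, ht₂e, ht₂v⟩ := part_i hp hfin hsum h2
  have ht : t₁ = t₂ := exp_I_inj ht₁I ht₂I (by rw [← ht₁e, ← ht₂e, he])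
  have hx : ∀ x : Fin d → ℤ,
      Complex.exp ((pairR θ₁ (emb x) : ℂ) * Complex.I)
        = Complex.exp ((pairR θ₂ (emb x) : ℂ) * Complex.I) := by
    intro x
    obtain ⟨n, hn, hpos⟩ := hirr x
    rw [char_of_tfun hp ht₁v n x hpos, char_of_tfun hp ht₂v n x hpos, ht]
  have hp1 : ∀ (θ : E d) (i : Fin d), pairR θ (emb (Pi.single i 1)) = θ i := by
    intro θ i
    unfold pairR emb
    simp [Pi.single_apply]
  ext i
  have hxi := hx (Pi.single i 1)
  rw [hp1 θ₁ i, hp1 θ₂ i] at hxi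
  exact exp_I_inj (h1.1 i) (h2.1 i) hxi

lemma tfun_smul (hp : ∀ v, 0 ≤ p v) (hfin : (Function.support p).Finite)
    {n : ℕ} {x : Fin d → ℤ} (h : 0 < tfun p n x) :
    ∀ m : ℕ, 0 < tfun p (m * n) (m • x)
  | 0 => by
    rw [zero_mul, zero_smul]
    rw [tfun_zero_zero]; norm_num
  | m+1 => by
    have := tfun_conv hp hfin (tfun_smul hp hfin h m) h
    rw [succ_nsmul, add_one_mul]
    exact this

lemma tfun_sum (hp : ∀ v, 0 ≤ p v) (hfin : (Function.support p).Finite)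
    {ι : Type*} [DecidableEq ι] (s : Finset ι) (n : ι → ℕ) (x : ι → Fin d → ℤ)
    (h : ∀ j ∈ s, 0 < tfun p (n j) (x j)) :
    0 < tfun p (∑ j ∈ s, n j) (∑ j ∈ s, x j) := by
  induction s using Finset.induction_on with
  | empty => simp only [Finset.sum_empty]; rw [tfun_zero_zero]; norm_num
  | insert j s' hj ih =>
    rw [Finset.sum_insert hj, Finset.sum_insert hj]
    exact tfun_conv hp hfin (h j (Finset.mem_insert_self j s'))
      (ih fun i hi => h i (Finset.mem_insert_of_mem hi))

lemma tfun_mod (hp : ∀ v, 0 ≤ p v) (hfin : (Function.support p).Finite)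
    (hirr : Irred p) {r : ℕ}
    (hr1 : ∀ n : ℕ, 0 < n → 0 < tfun p n 0 → r ∣ n)
    {x : Fin d → ℤ} {a b : ℕ} (ha : 0 < tfun p a x) (hb : 0 < tfun p b x) :
    (r : ℤ) ∣ (a : ℤ) - b := by
  obtain ⟨n', hn', hx'⟩ := hirr (-x)
  have e : x + -x = (0 : Fin d → ℤ) := by abel
  have h1 : 0 < tfun p (a + n') 0 := by
    have := tfun_conv hp hfin ha hx'; rwa [e] at this
  have h2 : 0 < tfun p (b + n') 0 := by
    have := tfun_conv hp hfin hb hx'; rwa [e] at this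
  have d1 : (r:ℤ) ∣ ((a + n' : ℕ) : ℤ) := Int.natCast_dvd_natCast.2 (hr1 _ (by omega) h1)
  have d2 : (r:ℤ) ∣ ((b + n' : ℕ) : ℤ) := Int.natCast_dvd_natCast.2 (hr1 _ (by omega) h2)
  have := dvd_sub d1 d2
  have e2 : ((a + n' : ℕ) : ℤ) - ((b + n' : ℕ) : ℤ) = (a:ℤ) - b := by push_cast; ring
  rwa [e2] at this

lemma coef_dvd (hp : ∀ v, 0 ≤ p v) (hfin : (Function.support p).Finite)
    (hirr : Irred p) {r : ℕ}
    (hr1 : ∀ n : ℕ, 0 < n → 0 < tfun p n 0 → r ∣ n)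
    (c : Fin d → ℕ) (hc : ∀ j, 0 < tfun p (c j) (Pi.single j 1))
    {v : Fin d → ℤ} (hv : 0 < p v) :
    (r : ℤ) ∣ (∑ j, v j * (c j : ℤ)) - 1 := by
  set a : Fin d → ℕ := fun j => (v j).toNat with hadef
  set b : Fin d → ℕ := fun j => (-(v j)).toNat with hbdef
  have hA : 0 < tfun p (∑ j, a j * c j) (∑ j, (a j) • Pi.single j (1:ℤ)) :=
    tfun_sum hp hfin Finset.univ _ _ fun j _ => tfun_smul hp hfin (hc j) (a j)
  have hB : 0 < tfun p (∑ j, b j * c j) (∑ j, (b j) • Pi.single j (1:ℤ)) :=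
    tfun_sum hp hfin Finset.univ _ _ fun j _ => tfun_smul hp hfin (hc j) (b j)
  have hv1 : 0 < tfun p 1 v := by rw [tfun_one]; exact hv
  have h1 : 0 < tfun p (1 + ∑ j, b j * c j) (v + ∑ j, (b j) • Pi.single j (1:ℤ)) :=
    tfun_conv hp hfin hv1 hB
  have hpt : v + (∑ j, (b j) • Pi.single j (1:ℤ)) = ∑ j, (a j) • Pi.single j (1:ℤ) := by
    funext i
    have hsa : (∑ j, (a j) • Pi.single j (1:ℤ)) i = a i := by
      rw [Finset.sum_apply]
      simp [Pi.single_apply]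
    have hsb : (∑ j, (b j) • Pi.single j (1:ℤ)) i = b i := by
      rw [Finset.sum_apply]
      simp [Pi.single_apply]
    show v i + (∑ j, (b j) • Pi.single j (1:ℤ)) i = _
    rw [hsb, hsa, hadef, hbdef]
    simp only
    omega
  rw [hpt] at h1
  have hd := tfun_mod hp hfin hirr hr1 h1 hA
  have hv' : ∀ j, (v j : ℤ) = (a j : ℤ) - (b j : ℤ) := fun j => by
    rw [hadef, hbdef]; simp only; omega
  have e : (∑ j, v j * (c j : ℤ)) - 1
      = -(((1 + ∑ j, b j * c j : ℕ) : ℤ) - ((∑ j, a j * c j : ℕ) : ℤ)) := by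
    rw [Finset.sum_congr rfl fun j _ => by rw [hv' j]]
    push_cast
    rw [Finset.sum_congr rfl fun (j : Fin d) (_ : j ∈ Finset.univ) =>
      (sub_mul ((a j : ℤ)) ((b j : ℤ)) ((c j : ℤ))), Finset.sum_sub_distrib]
    ring
  rw [e]
  exact dvd_neg.2 hd

lemma theta_k (hp : ∀ v, 0 ≤ p v) (hfin : (Function.support p).Finite)
    (hsum : ∑ᶠ v, p v = 1) (hirr : Irred p) {r : ℕ}
    (hr1 : ∀ n : ℕ, 0 < n → 0 < tfun p n 0 → r ∣ n) (rpos : 0 < r)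
    (c : Fin d → ℕ) (hc : ∀ j, 0 < tfun p (c j) (Pi.single j 1)) (k : ℕ) :
    ∃ Θ : E d, Θ ∈ Uset p ∧ kappaC p (fun i => (Θ i : ℂ) * Complex.I)
      = Complex.exp (((2 * Real.pi * k / r : ℝ) : ℂ) * Complex.I) := by
  have h2pi : (0:ℝ) < 2 * Real.pi := by positivity
  set α : Fin d → ℝ := fun j => 2 * Real.pi * k * (c j) / r with hα
  set Θ : E d := WithLp.toLp 2 (fun j => toIcoMod h2pi (-Real.pi) (α j)) with hΘ
  have hΘj : ∀ j, Θ j = α j - ((toIcoDiv h2pi (-Real.pi) (α j) : ℤ) : ℝ) * (2 * Real.pi) := by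
    intro j
    have h := self_sub_toIcoMod h2pi (-Real.pi) (α j)
    rw [zsmul_eq_mul] at h
    have h2 : Θ j = toIcoMod h2pi (-Real.pi) (α j) := by rw [hΘ]
    linarith [h, h2.ge, h2.le]
  have hr0 : (r:ℝ) ≠ 0 := Nat.cast_ne_zero.2 rpos.ne'
  have key : ∀ v ∈ Function.support p, ∃ N : ℤ,
      pairR Θ (emb v) = 2*Real.pi*k/r + (N:ℝ) * (2*Real.pi) := by
    intro v hv
    have hpv : 0 < p v := lt_of_le_of_ne (hp v) (Ne.symm hv)
    obtain ⟨s, hs⟩ := coef_dvd hp hfin hirr hr1 c hc hpv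
    set m : Fin d → ℤ := fun j => toIcoDiv h2pi (-Real.pi) (α j) with hm
    refine ⟨(k:ℤ) * s - ∑ j, m j * v j, ?_⟩
    have e1 : pairR Θ (emb v)
        = (2*Real.pi*(k:ℝ)/r) * ((∑ j, v j * (c j:ℤ) : ℤ):ℝ)
          - 2*Real.pi * ((∑ j, m j * v j : ℤ):ℝ) := by
      unfold pairR emb
      simp only [WithLp.ofLp_toLp]
      push_cast
      rw [Finset.mul_sum, Finset.mul_sum, ← Finset.sum_sub_distrib]
      refine Finset.sum_congr rfl fun j _ => ?_
      rw [hΘj j]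
      simp only [hα, hm]
      push_cast
      ring
    have hsZ : (∑ j, v j * (c j:ℤ)) = 1 + (r:ℤ) * s := by linarith [hs]
    rw [e1, hsZ]
    push_cast
    field_simp
    ring
  have hexp : ∀ v ∈ Function.support p,
      Complex.exp ((pairR Θ (emb v):ℂ) * Complex.I)
        = Complex.exp (((2*Real.pi*k/r : ℝ):ℂ) * Complex.I) := by
    intro v hv
    obtain ⟨N, hN⟩ := key v hv
    rw [Complex.exp_eq_exp_iff_exists_int]
    exact ⟨N, by rw [hN]; push_cast; ring⟩
  have hval : kappaC p (fun i => (Θ i : ℂ) * Complex.I)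
      = Complex.exp (((2*Real.pi*k/r : ℝ):ℂ) * Complex.I) := by
    rw [kappaC_eq hfin]
    rw [Finset.sum_congr rfl fun v hv => by rw [hexp v (hfin.mem_toFinset.1 hv)]]
    rw [← Finset.sum_mul]
    have hs1 : (∑ v ∈ hfin.toFinset, (p v : ℂ)) = 1 := by
      norm_cast
      exact sum_p_eq_one hfin hsum
    rw [hs1, one_mul]
  refine ⟨Θ, ⟨?_, ?_⟩, hval⟩
  · intro i
    have h := toIcoMod_mem_Ico h2pi (-Real.pi) (α i)
    rw [show -Real.pi + 2*Real.pi = Real.pi by ring] at h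
    simpa [hΘ] using h
  · rw [hval]
    exact Complex.norm_exp_ofReal_mul_I _

/-- (i) each `θ₀ ∈ U` satisfies `κ(iθ₀) = e^{it}` with `e^{i⟨θ₀,v⟩} = e^{it}` for all `v ∈ V`;
(ii) `κ(iθ₀)^r = 1`; (iii) `U` has exactly `r` elements.  The period `r` is specified by
the gcd hypotheses `hr1`, `hr2`. -/
theorem statement15 (d : ℕ) (p : (Fin d → ℤ) → ℝ) (hp : ∀ v, 0 ≤ p v)
    (hfin : (Function.support p).Finite) (hsum : ∑ᶠ v, p v = 1) (hirr : Irred p)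
    (r : ℕ) (hr1 : ∀ n : ℕ, 0 < n → 0 < tfun p n 0 → r ∣ n)
    (hr2 : ∀ m : ℕ, (∀ n : ℕ, 0 < n → 0 < tfun p n 0 → m ∣ n) → m ∣ r) :
    (∀ θ₀ ∈ Uset p, ∃ t : ℝ, t ∈ Set.Ico (-Real.pi) Real.pi ∧
      kappaC p (fun i => (θ₀ i : ℂ) * Complex.I) = Complex.exp (t * Complex.I) ∧
      ∀ v ∈ Function.support p,
        Complex.exp ((pairR θ₀ (emb v) : ℂ) * Complex.I) = Complex.exp (t * Complex.I)) ∧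
    (∀ θ₀ ∈ Uset p, kappaC p (fun i => (θ₀ i : ℂ) * Complex.I) ^ r = 1) ∧
    ((Uset p).Finite ∧ (Uset p).ncard = r) := by
  obtain ⟨n0, hn0pos, hn0⟩ := hirr 0
  have hdvd := hr1 n0 hn0pos hn0
  have rpos : 0 < r := by
    rcases Nat.eq_zero_or_pos r with h | h
    · subst h
      exact absurd (Nat.eq_zero_of_zero_dvd hdvd) hn0pos.ne'
    · exact h
  haveI : NeZero r := ⟨rpos.ne'⟩
  haveI : DecidableEq (E d) := Classical.decEq _
  choose c hcpos hc using fun j : Fin d => hirr (Pi.single j (1:ℤ))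
  choose Θ hΘU hΘval using fun k : ℕ => theta_k hp hfin hsum hirr hr1 rpos c hc k
  set ζ := Complex.exp (2 * Real.pi * Complex.I / r) with hζ
  have hprim : IsPrimitiveRoot ζ r := Complex.isPrimitiveRoot_exp r rpos.ne'
  have hζk : ∀ k : ℕ, ζ ^ k = Complex.exp (((2*Real.pi*k/r : ℝ):ℂ) * Complex.I) := by
    intro k
    rw [hζ, ← Complex.exp_nat_mul]
    congr 1
    push_cast
    ring
  refine ⟨fun θ₀ hθ => part_i hp hfin hsum hθ,
    fun θ₀ hθ => part_ii hp hfin hsum hr2 hθ, ?_⟩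
  have hUeq : Uset p = ↑((Finset.range r).image Θ) := by
    ext θ
    simp only [Finset.coe_image, Finset.coe_range, Set.mem_image, Set.mem_Iio]
    constructor
    · intro hθ
      have hpow := part_ii hp hfin hsum hr2 hθ
      obtain ⟨k, hk, hke⟩ := hprim.eq_pow_of_pow_eq_one hpow
      refine ⟨k, hk, ?_⟩
      apply kappa_inj hp hfin hsum hirr (hΘU k) hθ
      rw [hΘval k, ← hζk k, hke]
    · rintro ⟨k, hk, rfl⟩
      exact hΘU k
  constructor
  · rw [hUeq]
    exact Finset.finite_toSet _
  · rw [hUeq, Set.ncard_coe_finset]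
    rw [Finset.card_image_of_injOn, Finset.card_range]
    intro k1 h1 k2 h2 he
    simp only [Finset.mem_coe, Finset.mem_range] at h1 h2
    have hzz : ζ ^ k1 = ζ ^ k2 := by
      rw [hζk, hζk, ← hΘval k1, ← hΘval k2, he]
    exact hprim.pow_inj h1 h2 hzz

end RWalk
end
end
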